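/- For each dimension p ≥ 1 there exists a finite constant κ_p, depending only on p, such that for all x, y, y' ∈ ℝ^p, ‖((x−y)(x−y)ᵀ)^{1/2} − ((x−y')(x−y')ᵀ)^{1/2}‖_F ≤ κ_p ‖y − y'‖. Equivalently, the map z ↦ (z zᵀ)^{1/2} = z zᵀ/‖z‖ (set to 0 at z = 0) is Lipschitz on ℝ^p with constant κ_p. -/

import Mathlib

open Matrix MeasureTheory ProbabilityTheory

noncomputable def eunorm {p : ℕ} (x : Fin p → ℝ) : ℝ := Real.sqrt (∑ i, x i ^ 2)

noncomputable def frob {p : ℕ} (M : Matrix (Fin p) (Fin p) ℝ) : ℝ :=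
  Real.sqrt (∑ i, ∑ j, M i j ^ 2)

open Classical in
noncomputable def msqrt {p : ℕ} (A : Matrix (Fin p) (Fin p) ℝ) : Matrix (Fin p) (Fin p) ℝ :=
  if h : A.PosSemidef then
    (h.1.eigenvectorUnitary : Matrix (Fin p) (Fin p) ℝ) *
      diagonal ((↑) ∘ (fun x => Real.sqrt x) ∘ h.1.eigenvalues) *
      (star h.1.eigenvectorUnitary : Matrix (Fin p) (Fin p) ℝ)
  else 0

noncomputable def dS {p : ℕ} (A B : Matrix (Fin p) (Fin p) ℝ) : ℝ := frob (msqrt A - msqrt B)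

noncomputable def mExp {p : ℕ} {Ωs : Type*} [MeasurableSpace Ωs] (μ : Measure Ωs)
    (F : Ωs → Matrix (Fin p) (Fin p) ℝ) : Matrix (Fin p) (Fin p) ℝ :=
  Matrix.of fun i j => ∫ ω, F ω i j ∂μ

noncomputable def covDS {p : ℕ} {Ωs : Type*} [MeasurableSpace Ωs] (μ : Measure Ωs)
    (Y : Ωs → Fin p → ℝ) : Matrix (Fin p) (Fin p) ℝ :=
  (mExp μ fun ω => msqrt (vecMulVec (Y ω - fun r => ∫ ω', Y ω' r ∂μ) (Y ω - fun r => ∫ ω', Y ω' r ∂μ))) *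
  (mExp μ fun ω => msqrt (vecMulVec (Y ω - fun r => ∫ ω', Y ω' r ∂μ) (Y ω - fun r => ∫ ω', Y ω' r ∂μ)))

-- aux
lemma eunorm_nonneg {p : ℕ} (x : Fin p → ℝ) : 0 ≤ eunorm x := Real.sqrt_nonneg _

lemma eunorm_eq_zero {p : ℕ} {x : Fin p → ℝ} (h : eunorm x = 0) : x = 0 := by
  have hs : (∑ i, x i ^ 2) = 0 := by
    have h1 := Real.sqrt_eq_zero'.mp h
    have h2 : (0:ℝ) ≤ ∑ i, x i ^ 2 := Finset.sum_nonneg fun i _ => sq_nonneg _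
    linarith
  funext i
  have := (Finset.sum_eq_zero_iff_of_nonneg (fun i _ => sq_nonneg (x i))).mp hs i (Finset.mem_univ i)
  exact pow_eq_zero_iff (n := 2) (by norm_num) |>.mp this

lemma posSemidef_vecMulVec {p : ℕ} (z : Fin p → ℝ) : (vecMulVec z z).PosSemidef := by
  have h : vecMulVec z z = (replicateRow (Fin 1) z)ᴴ * replicateRow (Fin 1) z := by
    rw [conjTranspose_replicateRow]
    simp [vecMulVec_eq (Fin 1)]
    rfl
  rw [h]
  exact posSemidef_conjTranspose_mul_self _

lemma smul_vecMulVec_sq {p : ℕ} (z : Fin p → ℝ) :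
    ((eunorm z)⁻¹ • vecMulVec z z) ^ 2 = vecMulVec z z := by
  by_cases hz : z = 0
  · subst hz
    ext i j
    simp [vecMulVec_apply, pow_two, Matrix.mul_apply]
  · have hS : (0:ℝ) < ∑ i, z i ^ 2 := by
      rcases Function.ne_iff.mp hz with ⟨i, hi⟩
      refine Finset.sum_pos' (fun k _ => sq_nonneg _) ⟨i, Finset.mem_univ i, by have h0 : z i ≠ 0 := hi; positivity⟩
    have he : eunorm z ^ 2 = ∑ i, z i ^ 2 := Real.sq_sqrt hS.le
    have hne : eunorm z ≠ 0 := by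
      intro h; exact hz (eunorm_eq_zero h)
    ext i j
    simp only [pow_two, Matrix.mul_apply, Matrix.smul_apply, vecMulVec_apply, smul_eq_mul]
    have : ∑ k, (eunorm z)⁻¹ * (z i * z k) * ((eunorm z)⁻¹ * (z k * z j)) =
        ((eunorm z)⁻¹ * (eunorm z)⁻¹ * (z i * z j)) * ∑ k, z k ^ 2 := by
      rw [Finset.mul_sum]; apply Finset.sum_congr rfl; intro k _; ring
    rw [this, ← he, pow_two,
      show (eunorm z)⁻¹ * (eunorm z)⁻¹ * (z i * z j) * (eunorm z * eunorm z) =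
        (eunorm z)⁻¹ * eunorm z * ((eunorm z)⁻¹ * eunorm z) * (z i * z j) from by ring,
      inv_mul_cancel₀ hne, one_mul, one_mul]

lemma posSemidef_smul_vecMulVec {p : ℕ} (z : Fin p → ℝ) :
    ((eunorm z)⁻¹ • vecMulVec z z).PosSemidef := by
  have h := posSemidef_vecMulVec z
  refine .of_dotProduct_mulVec_nonneg ?_ ?_
  · unfold Matrix.IsHermitian
    ext i j
    simp [vecMulVec_apply, mul_comm]
  · intro x
    have h2 := h.dotProduct_mulVec_nonneg x
    have hc : (0:ℝ) ≤ (eunorm z)⁻¹ := by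
      have := eunorm_nonneg z; positivity
    calc (0:ℝ) ≤ (eunorm z)⁻¹ * (star x ⬝ᵥ vecMulVec z z *ᵥ x) := by
          exact mul_nonneg hc h2
      _ = star x ⬝ᵥ ((eunorm z)⁻¹ • vecMulVec z z) *ᵥ x := by
          rw [smul_mulVec, dotProduct_smul, smul_eq_mul]

open scoped MatrixOrder in
lemma msqrt_vecMulVec {p : ℕ} (z : Fin p → ℝ) :
    msqrt (vecMulVec z z) = (eunorm z)⁻¹ • vecMulVec z z := by
  have hA := posSemidef_vecMulVec z
  have key : CFC.sqrt (vecMulVec z z) = (eunorm z)⁻¹ • vecMulVec z z :=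
    CFC.sqrt_unique (by rw [← sq]; exact smul_vecMulVec_sq z)
      (posSemidef_smul_vecMulVec z).nonneg
  rw [CFC.sqrt_eq_cfc, cfc_nnreal_eq_real _ _ hA.nonneg, hA.1.cfc_eq] at key
  rw [msqrt, dif_pos hA, ← key]
  simp only [IsHermitian.cfc, Unitary.conjStarAlgAut_apply, RCLike.ofReal_real_eq_id]
  unfold Real.sqrt
  rfl

-- Euclidean space machinery
noncomputable def toE {p : ℕ} (z : Fin p → ℝ) : EuclideanSpace ℝ (Fin p) :=
  (WithLp.equiv 2 _).symm z

noncomputable def outer {p : ℕ} (v w : EuclideanSpace ℝ (Fin p)) :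
    EuclideanSpace ℝ (Fin p × Fin p) :=
  (WithLp.equiv 2 _).symm fun ij => v ij.1 * w ij.2

lemma outer_apply {p : ℕ} (v w : EuclideanSpace ℝ (Fin p)) (ij : Fin p × Fin p) :
    outer v w ij = v ij.1 * w ij.2 := rfl

lemma eunorm_eq {p : ℕ} (z : Fin p → ℝ) : eunorm z = ‖toE z‖ := by
  rw [EuclideanSpace.norm_eq, eunorm]
  congr 1
  apply Finset.sum_congr rfl
  intro i _
  rw [Real.norm_eq_abs, sq_abs]
  rfl

lemma toE_sub {p : ℕ} (z z' : Fin p → ℝ) : toE (z - z') = toE z - toE z' := rfl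

lemma norm_outer {p : ℕ} (v w : EuclideanSpace ℝ (Fin p)) :
    ‖outer v w‖ = ‖v‖ * ‖w‖ := by
  rw [EuclideanSpace.norm_eq, EuclideanSpace.norm_eq, EuclideanSpace.norm_eq,
    ← Real.sqrt_mul (by positivity)]
  congr 1
  rw [Finset.sum_mul_sum, Fintype.sum_prod_type]
  apply Finset.sum_congr rfl; intro i _
  apply Finset.sum_congr rfl; intro j _
  rw [outer_apply]
  simp [Real.norm_eq_abs, sq_abs, abs_mul, mul_pow]

noncomputable def gmap {p : ℕ} (v : EuclideanSpace ℝ (Fin p)) :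
    EuclideanSpace ℝ (Fin p × Fin p) := ‖v‖⁻¹ • outer v v

lemma gmap_decomp {p : ℕ} (v w : EuclideanSpace ℝ (Fin p)) :
    gmap v - gmap w = ‖v‖⁻¹ • outer (v - w) v + ‖v‖⁻¹ • outer w (v - w)
      + (‖v‖⁻¹ - ‖w‖⁻¹) • outer w w := by
  unfold gmap
  ext ij
  simp only [PiLp.sub_apply, PiLp.add_apply, PiLp.smul_apply, outer_apply, smul_eq_mul]
  ring

lemma gmap_lip_aux {p : ℕ} (v w : EuclideanSpace ℝ (Fin p)) (hle : ‖w‖ ≤ ‖v‖) :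
    ‖gmap v - gmap w‖ ≤ 3 * ‖v - w‖ := by
  by_cases hw : ‖w‖ = 0
  · have hw0 : w = 0 := norm_eq_zero.mp hw
    subst hw0
    have h0 : outer (0 : EuclideanSpace ℝ (Fin p)) 0 = 0 := by
      ext ij; simp [outer_apply]
    rw [show gmap (0 : EuclideanSpace ℝ (Fin p)) = 0 by rw [gmap, h0, smul_zero], sub_zero,
      sub_zero]
    by_cases hv : ‖v‖ = 0
    · rw [gmap, hv, norm_smul, norm_outer]
      simp [hv]
    · rw [gmap, norm_smul, norm_outer, Real.norm_eq_abs, abs_inv, abs_norm]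
      have hv' : 0 < ‖v‖ := lt_of_le_of_ne (norm_nonneg v) (Ne.symm hv)
      rw [show ‖v‖⁻¹ * (‖v‖ * ‖v‖) = ‖v‖ from by field_simp]
      linarith
  · have hw' : 0 < ‖w‖ := lt_of_le_of_ne (norm_nonneg w) (Ne.symm hw)
    have hv' : 0 < ‖v‖ := lt_of_lt_of_le hw' hle
    rw [gmap_decomp]
    refine le_trans (norm_add₃_le) ?_
    have h1 : ‖‖v‖⁻¹ • outer (v - w) v‖ = ‖v‖⁻¹ * (‖v - w‖ * ‖v‖) := by
      rw [norm_smul, norm_outer, Real.norm_eq_abs, abs_inv, abs_norm]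
    have h2 : ‖‖v‖⁻¹ • outer w (v - w)‖ = ‖v‖⁻¹ * (‖w‖ * ‖v - w‖) := by
      rw [norm_smul, norm_outer, Real.norm_eq_abs, abs_inv, abs_norm]
    have h3 : ‖(‖v‖⁻¹ - ‖w‖⁻¹) • outer w w‖ = (‖w‖⁻¹ - ‖v‖⁻¹) * (‖w‖ * ‖w‖) := by
      rw [norm_smul, norm_outer, Real.norm_eq_abs, abs_of_nonpos (by
        have := inv_anti₀ hw' hle
        linarith), neg_sub]
    rw [h1, h2, h3]
    have hnn : ‖v‖ - ‖w‖ ≤ ‖v - w‖ := norm_sub_norm_le v w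
    have hd : 0 ≤ ‖v - w‖ := norm_nonneg _
    have e1 : ‖v‖⁻¹ * (‖v - w‖ * ‖v‖) = ‖v - w‖ := by field_simp
    have e2 : ‖v‖⁻¹ * (‖w‖ * ‖v - w‖) ≤ ‖v - w‖ := by
      rw [show ‖v‖⁻¹ * (‖w‖ * ‖v - w‖) = (‖w‖ / ‖v‖) * ‖v - w‖ from by ring]
      have : ‖w‖ / ‖v‖ ≤ 1 := (div_le_one hv').mpr hle
      nlinarith
    have e3 : (‖w‖⁻¹ - ‖v‖⁻¹) * (‖w‖ * ‖w‖) ≤ ‖v - w‖ := by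
      have key : (‖w‖⁻¹ - ‖v‖⁻¹) * (‖w‖ * ‖w‖) = (‖v‖ - ‖w‖) * (‖w‖ / ‖v‖) := by
        field_simp
      rw [key]
      have h4 : ‖w‖ / ‖v‖ ≤ 1 := (div_le_one hv').mpr hle
      nlinarith
    linarith

lemma gmap_lip {p : ℕ} (v w : EuclideanSpace ℝ (Fin p)) :
    ‖gmap v - gmap w‖ ≤ 3 * ‖v - w‖ := by
  rcases le_total ‖w‖ ‖v‖ with h | h
  · exact gmap_lip_aux v w h
  · rw [norm_sub_rev, norm_sub_rev v w]
    exact gmap_lip_aux w v h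

lemma frob_diff_eq {p : ℕ} (z z' : Fin p → ℝ) :
    frob (msqrt (vecMulVec z z) - msqrt (vecMulVec z' z')) =
      ‖gmap (toE z) - gmap (toE z')‖ := by
  rw [msqrt_vecMulVec, msqrt_vecMulVec, frob, EuclideanSpace.norm_eq, Fintype.sum_prod_type]
  congr 1
  apply Finset.sum_congr rfl; intro i _
  apply Finset.sum_congr rfl; intro j _
  rw [Real.norm_eq_abs, sq_abs]
  congr 1
  show ((eunorm z)⁻¹ • vecMulVec z z - (eunorm z')⁻¹ • vecMulVec z' z') i j =
    gmap (toE z) (i, j) - gmap (toE z') (i, j)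
  simp only [Matrix.sub_apply, Matrix.smul_apply, vecMulVec_apply, smul_eq_mul, gmap,
    PiLp.smul_apply, outer_apply, smul_eq_mul, eunorm_eq]
  rfl


/-- For each dimension `p ≥ 1` there is a finite constant `κ_p` such that
`z ↦ (z zᵀ)^{1/2}` is `κ_p`-Lipschitz on `ℝ^p` (Frobenius norm on matrices, Euclidean norm on
vectors); equivalently `‖((x−y)(x−y)ᵀ)^{1/2} − ((x−y')(x−y')ᵀ)^{1/2}‖_F ≤ κ_p ‖y − y'‖`. -/
theorem stmt6 (p : ℕ) (hp : 1 ≤ p) :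
    ∃ κ : ℝ, 0 ≤ κ ∧
      (∀ x y y' : Fin p → ℝ,
        frob (msqrt (vecMulVec (x - y) (x - y)) - msqrt (vecMulVec (x - y') (x - y'))) ≤
          κ * eunorm (y - y')) ∧
      (∀ z z' : Fin p → ℝ,
        frob (msqrt (vecMulVec z z) - msqrt (vecMulVec z' z')) ≤ κ * eunorm (z - z')) := by
  refine ⟨3, by norm_num, ?_, ?_⟩
  · intro x y y'
    rw [frob_diff_eq, eunorm_eq]
    have h : toE (y - y') = -(toE (x - y) - toE (x - y')) := by
      ext i
      simp only [toE, WithLp.equiv_symm_apply, PiLp.toLp_apply, PiLp.neg_apply, PiLp.sub_apply, Pi.sub_apply]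
      ring
    rw [h, norm_neg]
    exact gmap_lip _ _
  · intro z z'
    rw [frob_diff_eq, eunorm_eq, toE_sub]
    exact gmap_lip _ _
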